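/- The Taylor expansion coth(x) − 1/x = x/3 − x³/45 + O(x⁵) holds near 0; in particular coth(x) − 1/x ≤ x/3 for all x > 0. -/

import Mathlib

open Filter Asymptotics

private lemma exp_rem (x : ℝ) (hx : |x| ≤ 1) :
    |Real.exp x - (1 + x + x^2/2 + x^3/6 + x^4/24 + x^5/120 + x^6/720)| ≤ |x|^7 := by
  have h := Real.exp_bound hx (n := 7) (by norm_num)
  have hsum : ∑ m ∈ Finset.range 7, x ^ m / m.factorial
      = 1 + x + x^2/2 + x^3/6 + x^4/24 + x^5/120 + x^6/720 := by
    simp [Finset.sum_range_succ, Nat.factorial]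
  rw [hsum] at h
  calc |Real.exp x - (1 + x + x^2/2 + x^3/6 + x^4/24 + x^5/120 + x^6/720)|
      ≤ |x|^7 * ((7:ℕ).succ / ((7:ℕ).factorial * 7)) := h
    _ ≤ |x|^7 * 1 := by
        gcongr
        norm_num [Nat.factorial]
    _ = |x|^7 := mul_one _

private lemma sinh_rem (x : ℝ) (hx : |x| ≤ 1) :
    |Real.sinh x - (x + x^3/6 + x^5/120)| ≤ |x|^7 := by
  have h1 := exp_rem x hx
  have h2 := exp_rem (-x) (by rwa [abs_neg])
  rw [abs_neg] at h2
  have key := (abs_sub _ _).trans (add_le_add h1 h2)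
  have hs : Real.sinh x - (x + x^3/6 + x^5/120)
      = ((Real.exp x - (1 + x + x^2/2 + x^3/6 + x^4/24 + x^5/120 + x^6/720))
        - (Real.exp (-x) - (1 + (-x) + (-x)^2/2 + (-x)^3/6 + (-x)^4/24 + (-x)^5/120 + (-x)^6/720))) / 2 := by
    rw [Real.sinh_eq]; ring
  rw [hs, abs_div, abs_two]
  linarith
private lemma cosh_rem (x : ℝ) (hx : |x| ≤ 1) :
    |Real.cosh x - (1 + x^2/2 + x^4/24 + x^6/720)| ≤ |x|^7 := by
  have h1 := exp_rem x hx
  have h2 := exp_rem (-x) (by rwa [abs_neg])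
  rw [abs_neg] at h2
  have key := (abs_add_le _ _).trans (add_le_add h1 h2)
  have hs : Real.cosh x - (1 + x^2/2 + x^4/24 + x^6/720)
      = ((Real.exp x - (1 + x + x^2/2 + x^3/6 + x^4/24 + x^5/120 + x^6/720))
        + (Real.exp (-x) - (1 + (-x) + (-x)^2/2 + (-x)^3/6 + (-x)^4/24 + (-x)^5/120 + (-x)^6/720))) / 2 := by
    rw [Real.cosh_eq]; ring
  rw [hs, abs_div, abs_two]
  linarith

private lemma N_bound (x : ℝ) (hx : |x| ≤ 1) :
    |45*x*Real.cosh x - (45 + 15*x^2 - x^4)*Real.sinh x| ≤ 107 * |x|^7 := by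
  have hc := cosh_rem x hx
  have hs := sinh_rem x hx
  set Rc := Real.cosh x - (1 + x^2/2 + x^4/24 + x^6/720) with hRc
  set Rs := Real.sinh x - (x + x^3/6 + x^5/120) with hRs
  have hid : 45*x*Real.cosh x - (45 + 15*x^2 - x^4)*Real.sinh x
      = (5/48*x^7 + 1/120*x^9) + 45*x*Rc - (45 + 15*x^2 - x^4)*Rs := by
    rw [hRc, hRs]; ring
  rw [hid]
  have hx2 : x^2 ≤ 1 := by
    have := abs_le.mp hx; nlinarith
  have hax : |x|^2 ≤ 1 := by rwa [sq_abs]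
  have h7 : |x^7| = |x|^7 := abs_pow x 7
  have h9 : |x^9| ≤ |x|^7 := by
    rw [abs_pow]
    calc |x|^9 = |x|^7 * |x|^2 := by ring
      _ ≤ |x|^7 * 1 := by gcongr
      _ = |x|^7 := mul_one _
  have hQ : |45 + 15*x^2 - x^4| ≤ 61 := by
    rw [abs_le]; constructor <;> nlinarith [sq_nonneg x, sq_nonneg (x^2)]
  have hxRc : |45*x*Rc| ≤ 45 * |x|^7 := by
    rw [abs_mul, abs_mul]
    calc |(45:ℝ)| * |x| * |Rc| ≤ 45 * 1 * |x|^7 := by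
          apply mul_le_mul ?_ hc (abs_nonneg _) (by norm_num)
          rw [abs_of_nonneg (by norm_num : (0:ℝ) ≤ 45)]
          exact mul_le_mul_of_nonneg_left hx (by norm_num)
      _ = 45 * |x|^7 := by ring
  have hQRs : |(45 + 15*x^2 - x^4)*Rs| ≤ 61 * |x|^7 := by
    rw [abs_mul]
    exact mul_le_mul hQ hs (abs_nonneg _) (by norm_num)
  have hP : |5/48*x^7 + 1/120*x^9| ≤ 1 * |x|^7 := by
    have h1 : |5/48*x^7 + 1/120*x^9| ≤ 5/48*|x|^7 + 1/120*|x^9| := by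
      refine (abs_add_le _ _).trans ?_
      rw [abs_mul, abs_mul, h7]
      have e1 : |(5/48 : ℝ)| = 5/48 := by norm_num
      have e2 : |(1/120 : ℝ)| = 1/120 := by norm_num
      rw [e1, e2]
    nlinarith [h9, pow_nonneg (abs_nonneg x) 7]
  calc |(5/48*x^7 + 1/120*x^9) + 45*x*Rc - (45 + 15*x^2 - x^4)*Rs|
      ≤ |5/48*x^7 + 1/120*x^9| + |45*x*Rc| + |(45 + 15*x^2 - x^4)*Rs| := by
        exact (abs_sub _ _).trans (add_le_add (abs_add_le _ _) le_rfl)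
    _ ≤ 1 * |x|^7 + 45 * |x|^7 + 61 * |x|^7 := by gcongr
    _ = 107 * |x|^7 := by ring

private lemma x_sinh (x : ℝ) : x^2 ≤ x * Real.sinh x := by
  rcases le_or_gt 0 x with h | h
  · have : x ≤ Real.sinh x := Real.self_le_sinh_iff.mpr h
    nlinarith
  · have h1 : Real.sinh x ≤ x := Real.sinh_le_self_iff.mpr h.le
    nlinarith

private lemma xcosh_ge (x : ℝ) (hx : 0 ≤ x) : Real.sinh x ≤ x * Real.cosh x := by
  have hmono : MonotoneOn (fun x => x * Real.cosh x - Real.sinh x) (Set.Ici 0) := by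
    apply monotoneOn_of_deriv_nonneg (convex_Ici 0)
    · exact ((continuous_id.mul Real.continuous_cosh).sub Real.continuous_sinh).continuousOn
    · intro y _
      exact (((hasDerivAt_id y).mul (Real.hasDerivAt_cosh y)).sub
        (Real.hasDerivAt_sinh y)).differentiableAt.differentiableWithinAt
    · intro y hy
      rw [interior_Ici, Set.mem_Ioi] at hy
      have hD : HasDerivAt (fun x => x * Real.cosh x - Real.sinh x) (y * Real.sinh y) y := by
        have h := ((hasDerivAt_id y).mul (Real.hasDerivAt_cosh y)).sub (Real.hasDerivAt_sinh y)
        refine h.congr_deriv ?_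
        simp only [id_eq]
        ring
      rw [hD.deriv]
      exact mul_nonneg hy.le (Real.sinh_pos_iff.mpr hy).le
  have := hmono (Set.self_mem_Ici) (Set.mem_Ici.mpr hx) hx
  simp only [Real.sinh_zero, Real.cosh_zero] at this
  linarith [this]

private lemma F2_nonneg (x : ℝ) (hx : 0 ≤ x) :
    0 ≤ x^2 * Real.sinh x - 3*x*Real.cosh x + 3*Real.sinh x := by
  have hmono : MonotoneOn (fun x => x^2 * Real.sinh x - 3*x*Real.cosh x + 3*Real.sinh x)
      (Set.Ici 0) := by
    apply monotoneOn_of_deriv_nonneg (convex_Ici 0)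
    · fun_prop
    · intro y _
      exact ((((hasDerivAt_pow 2 y).mul (Real.hasDerivAt_sinh y)).sub
        (((hasDerivAt_id y).const_mul 3).mul (Real.hasDerivAt_cosh y))).add
        ((Real.hasDerivAt_sinh y).const_mul 3)).differentiableAt.differentiableWithinAt
    · intro y hy
      rw [interior_Ici, Set.mem_Ioi] at hy
      have hD : HasDerivAt (fun x => x^2 * Real.sinh x - 3*x*Real.cosh x + 3*Real.sinh x)
          (y * (y * Real.cosh y - Real.sinh y)) y := by
        have h := (((hasDerivAt_pow 2 y).mul (Real.hasDerivAt_sinh y)).sub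
          (((hasDerivAt_id y).const_mul 3).mul (Real.hasDerivAt_cosh y))).add
          ((Real.hasDerivAt_sinh y).const_mul 3)
        refine h.congr_deriv ?_
        push_cast
        simp only [id_eq]
        ring
      rw [hD.deriv]
      exact mul_nonneg hy.le (by linarith [xcosh_ge y hy.le])
  have := hmono (Set.self_mem_Ici) (Set.mem_Ici.mpr hx) hx
  simpa using this

/-- Taylor expansion `coth x − 1/x = x/3 − x³/45 + O(x⁵)` near `0`; in particular
`coth x − 1/x ≤ x/3` for all `x > 0`. -/
theorem coth_sub_inv_taylor_and_bound :
    (fun x : ℝ => Real.cosh x / Real.sinh x - 1 / x - (x / 3 - x ^ 3 / 45))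
        =O[nhds 0] (fun x : ℝ => x ^ 5) ∧
      ∀ x : ℝ, 0 < x → Real.cosh x / Real.sinh x - 1 / x ≤ x / 3 := by
  constructor
  · rw [isBigO_iff]
    refine ⟨3, ?_⟩
    have hmem : Metric.closedBall (0:ℝ) 1 ∈ nhds (0:ℝ) :=
      Metric.closedBall_mem_nhds 0 one_pos
    filter_upwards [hmem] with x hx
    rw [Metric.mem_closedBall, Real.dist_eq, sub_zero] at hx
    rcases eq_or_ne x 0 with rfl | hx0
    · simp
    · have hsne : Real.sinh x ≠ 0 := Real.sinh_ne_zero.mpr hx0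
      have hxs : (0:ℝ) < x * Real.sinh x := by
        have := x_sinh x
        have h2 : (0:ℝ) < x^2 := by positivity
        linarith
      have hid : Real.cosh x / Real.sinh x - 1 / x - (x / 3 - x ^ 3 / 45)
          = (45*x*Real.cosh x - (45 + 15*x^2 - x^4)*Real.sinh x) / (45 * (x * Real.sinh x)) := by
        field_simp
        ring
      rw [hid, Real.norm_eq_abs, Real.norm_eq_abs, abs_div]
      rw [div_le_iff₀ (by positivity)]
      calc |45*x*Real.cosh x - (45 + 15*x^2 - x^4)*Real.sinh x|
          ≤ 107 * |x|^7 := N_bound x hx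
        _ ≤ 3 * |x ^ 5| * (45 * x^2) := by
            rw [abs_pow]
            have he : 107 * |x|^7 = (107 * |x|^5) * |x|^2 := by ring
            rw [he, sq_abs]
            have h5 : (0:ℝ) ≤ |x|^5 := by positivity
            nlinarith [sq_nonneg x, mul_nonneg h5 (sq_nonneg x)]
        _ ≤ 3 * |x ^ 5| * |45 * (x * Real.sinh x)| := by
            apply mul_le_mul_of_nonneg_left ?_ (by positivity)
            rw [abs_of_pos (mul_pos (by norm_num) hxs)]
            linarith [x_sinh x]
  · intro x hx
    have hs : (0:ℝ) < Real.sinh x := Real.sinh_pos_iff.mpr hx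
    rw [div_sub_div _ _ hs.ne' hx.ne', div_le_div_iff₀ (by positivity) (by norm_num : (0:ℝ) < 3)]
    have h := F2_nonneg x hx.le
    nlinarith
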